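/- Suppose G = (V,E) is a connected graph on n vertices with maximum degree Δ and volume vol(V) = 2|E|. Then there exists a partition C of V such that q(C) ≥ 2n/vol(V) − 3√(Δ/vol(V)) − Δ/vol(V). In particular, q*(G) ≥ 2n/vol(V) − 3√(Δ/vol(V)) − Δ/vol(V). -/

import Mathlib

open Finset

/-- Volume of a vertex set: sum of degrees. -/
def graphVol {V : Type*} [Fintype V] (G : SimpleGraph V) [DecidableRel G.Adj]
    (A : Finset V) : ℕ := ∑ v ∈ A, G.degree v

/-- Number of ordered pairs of adjacent vertices both in `A` (equals `2·e(A)`). -/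
def interiorPairs {V : Type*} [Fintype V] (G : SimpleGraph V) [DecidableRel G.Adj]
    (A : Finset V) : ℕ := ((A ×ˢ A).filter fun p => G.Adj p.1 p.2).card

set_option linter.unusedSectionVars false
set_option linter.unusedVariables false

section Aux
variable {V : Type*} [Fintype V] [DecidableEq V] (G : SimpleGraph V) [DecidableRel G.Adj]

/-- reachability within a vertex set -/
def ReachIn (S : Finset V) (x y : V) : Prop :=
  ∃ p : G.Walk x y, ∀ z ∈ p.support, z ∈ S

/-- connectivity of a vertex set -/
def ConnIn (S : Finset V) : Prop :=
  ∀ ⦃x⦄, x ∈ S → ∀ ⦃y⦄, y ∈ S → ReachIn G S x y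

variable {G}

lemma reachIn_refl {S : Finset V} {x : V} (hx : x ∈ S) : ReachIn G S x x :=
  ⟨SimpleGraph.Walk.nil, by simpa using hx⟩

lemma ReachIn.mem_left {S : Finset V} {x y : V} (h : ReachIn G S x y) : x ∈ S := by
  obtain ⟨p, hp⟩ := h; exact hp x p.start_mem_support

lemma ReachIn.mem_right {S : Finset V} {x y : V} (h : ReachIn G S x y) : y ∈ S := by
  obtain ⟨p, hp⟩ := h; exact hp y p.end_mem_support

lemma ReachIn.symm {S : Finset V} {x y : V} (h : ReachIn G S x y) : ReachIn G S y x := by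
  obtain ⟨p, hp⟩ := h
  exact ⟨p.reverse, fun z hz => hp z (by simpa using hz)⟩

lemma ReachIn.trans {S : Finset V} {x y z : V} (h : ReachIn G S x y) (h' : ReachIn G S y z) :
    ReachIn G S x z := by
  obtain ⟨p, hp⟩ := h; obtain ⟨q, hq⟩ := h'
  refine ⟨p.append q, fun u hu => ?_⟩
  rw [SimpleGraph.Walk.support_append, List.mem_append] at hu
  exact hu.elim (hp u) (fun h => hq u (List.mem_of_mem_tail h))

lemma ReachIn.mono {S S' : Finset V} (hSS : S ⊆ S') {x y : V} (h : ReachIn G S x y) :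
    ReachIn G S' x y := by
  obtain ⟨p, hp⟩ := h; exact ⟨p, fun z hz => hSS (hp z hz)⟩

lemma reachIn_adj {S : Finset V} {x y : V} (h : G.Adj x y) (hx : x ∈ S) (hy : y ∈ S) :
    ReachIn G S x y := by
  refine ⟨SimpleGraph.Walk.cons h SimpleGraph.Walk.nil, fun z hz => ?_⟩
  simp only [SimpleGraph.Walk.support_cons, SimpleGraph.Walk.support_nil,
    List.mem_cons, List.mem_singleton] at hz
  rcases hz with rfl | rfl | h; exacts [hx, hy, absurd h (by simp)]

/-- every vertex on a witnessing walk is reachable -/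
lemma ReachIn.mem_support {S : Finset V} {x y : V} (p : G.Walk x y)
    (hp : ∀ z ∈ p.support, z ∈ S) {u : V} (hu : u ∈ p.support) : ReachIn G S x u :=
  ⟨p.takeUntil u hu, fun z hz => hp z (p.support_takeUntil_subset hu hz)⟩

lemma connIn_singleton (v : V) : ConnIn G {v} := by
  intro x hx y hy
  simp only [mem_singleton] at hx hy
  subst hx; subst hy; exact reachIn_refl (mem_singleton_self _)

lemma connIn_of_hub {X : Finset V} {v : V} (hv : v ∈ X)
    (h : ∀ y ∈ X, ReachIn G X y v) : ConnIn G X :=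
  fun x hx y hy => (h x hx).trans (h y hy).symm

lemma connIn_union {A B : Finset V} (hA : ConnIn G A) (hB : ConnIn G B)
    {a b : V} (ha : a ∈ A) (hb : b ∈ B) (hab : G.Adj a b) : ConnIn G (A ∪ B) := by
  refine connIn_of_hub (mem_union_left _ ha) (fun y hy => ?_)
  rcases mem_union.mp hy with hyA | hyB
  · exact (hA hyA ha).mono subset_union_left
  · exact ((hB hyB hb).mono subset_union_right).trans
      (reachIn_adj hab.symm (mem_union_right _ hb) (mem_union_left _ ha))

/-- first crossing along a walk -/
lemma exists_crossing_walk {S A : Finset V} :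
    ∀ {x y : V} (p : G.Walk x y), (∀ z ∈ p.support, z ∈ S) → x ∈ A → y ∉ A →
      ∃ a ∈ A, ∃ b ∈ S, b ∉ A ∧ G.Adj a b := by
  intro x y p
  induction p with
  | nil => intro _ hx hy; exact absurd hx hy
  | cons h q ih =>
    intro hsupp hx hy
    rename_i u w _
    by_cases hw : w ∈ A
    · exact ih (fun z hz => hsupp z (by simp [hz])) hw hy
    · exact ⟨u, hx, w, hsupp w (by simp), hw, h⟩

lemma exists_crossing {S A : Finset V} (hS : ConnIn G S) (hA : A ⊆ S)
    (hne : A.Nonempty) (hne' : (S \ A).Nonempty) :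
    ∃ a ∈ A, ∃ b ∈ S, b ∉ A ∧ G.Adj a b := by
  obtain ⟨x, hx⟩ := hne
  obtain ⟨y, hy⟩ := hne'
  rw [mem_sdiff] at hy
  obtain ⟨p, hp⟩ := hS (hA hx) hy.1
  exact exists_crossing_walk p hp hx hy.2

/-- reaching an external vertex: last-stop neighbor -/
lemma exists_adj_of_walk {T : Finset V} :
    ∀ {x v : V} (p : G.Walk x v), v ∉ T → (∀ z ∈ p.support, z = v ∨ z ∈ T) → x ∈ T →
      ∃ u ∈ T, G.Adj u v ∧ ReachIn G T x u := by
  intro x v p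
  induction p with
  | nil => intro hv _ hx; exact absurd hx hv
  | cons h q ih =>
    intro hv hsupp hx
    rename_i u w _
    rcases hsupp w (by simp) with hw | hw
    · subst hw; exact ⟨u, hx, h, reachIn_refl hx⟩
    · obtain ⟨u', hu', hadj, hr⟩ := ih hv (fun z hz => hsupp z (by simp [hz])) hw
      exact ⟨u', hu', hadj, (reachIn_adj h hx hw).trans hr⟩

/-- a maximal proper connected subset misses exactly one vertex: non-cut vertex -/
lemma exists_noncut {S : Finset V} (hS : ConnIn G S) (hcard : 1 < S.card) :
    ∃ v ∈ S, ConnIn G (S.erase v) := by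
  classical
  set F := S.powerset.filter (fun A => A.Nonempty ∧ ConnIn G A ∧ A ≠ S) with hF
  have hFne : F.Nonempty := by
    obtain ⟨x, hx⟩ := card_pos.mp (Nat.lt_of_lt_of_le Nat.one_pos hcard.le)
    refine ⟨{x}, ?_⟩
    rw [hF, mem_filter, mem_powerset]
    refine ⟨singleton_subset_iff.mpr hx, singleton_nonempty x, connIn_singleton x, fun h => ?_⟩
    rw [← h] at hcard; simp at hcard
  obtain ⟨A, hAF, hAmax⟩ := F.exists_max_image (fun A => A.card) hFne
  rw [hF, mem_filter, mem_powerset] at hAF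
  obtain ⟨hAS, hAne, hAconn, hAneq⟩ := hAF
  have hSA : (S \ A).Nonempty := by
    rw [sdiff_nonempty]; exact fun h => hAneq (subset_antisymm hAS h)
  obtain ⟨a, ha, b, hbS, hbA, hab⟩ := exists_crossing hS hAS hAne hSA
  have hbig : A ∪ {b} = S := by
    by_contra hne
    have hmem : A ∪ {b} ∈ F := by
      rw [hF, mem_filter, mem_powerset]
      exact ⟨union_subset hAS (singleton_subset_iff.mpr hbS),
        hAne.mono subset_union_left,
        connIn_union hAconn (connIn_singleton b) ha (mem_singleton_self b) hab, hne⟩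
    have := hAmax _ hmem
    rw [card_union_of_disjoint (by simpa using hbA)] at this
    simp at this
  refine ⟨b, hbS, ?_⟩
  have : S.erase b = A := by
    rw [← hbig]
    rw [union_comm, ← insert_eq]
    exact erase_insert hbA
  rw [this]; exact hAconn


lemma graphVol_mono {A B : Finset V} (h : A ⊆ B) : graphVol G A ≤ graphVol G B :=
  sum_le_sum_of_subset h

lemma split_lemma {D : ℕ} {ℓ : ℝ} (hD2 : 2 ≤ D) (hdegD : ∀ v, G.degree v ≤ D)
    (hdeg1 : ∀ v : V, 1 ≤ G.degree v) (hℓ : 1 ≤ ℓ) {S : Finset V} (hS : ConnIn G S)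
    (hw : ℓ + D ≤ (graphVol G S : ℝ)) :
    ∃ A ⊆ S, A.Nonempty ∧ ConnIn G A ∧ ConnIn G (S \ A) ∧ (S \ A).Nonempty ∧
      ℓ ≤ (graphVol G A : ℝ) ∧ (graphVol G A : ℝ) ≤ D + ((D : ℝ) - 1) * ℓ := by
  classical
  have hℓ0 : (0:ℝ) ≤ ℓ := le_trans zero_le_one hℓ
  have hSne : S.Nonempty := by
    rcases S.eq_empty_or_nonempty with rfl | h
    · exfalso
      simp only [graphVol, sum_empty, Nat.cast_zero] at hw
      have : (0:ℝ) ≤ D := by positivity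
      linarith
    · exact h
  have hcard : 1 < S.card := by
    rcases lt_or_ge 1 S.card with h | h
    · exact h
    · exfalso
      have h1 : S.card = 1 := le_antisymm h (card_pos.mpr hSne)
      obtain ⟨v, hv⟩ := card_eq_one.mp h1
      subst hv
      have hgv : graphVol G {v} = G.degree v := by simp [graphVol]
      rw [hgv] at hw
      have hd : (G.degree v : ℝ) ≤ D := by exact_mod_cast hdegD v
      push_cast at hw
      linarith
  set Q := S.powerset.filter (fun A => A.Nonempty ∧ ConnIn G A ∧ ConnIn G (S \ A) ∧
      (S \ A).Nonempty ∧ ℓ ≤ (graphVol G A : ℝ)) with hQdef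
  have hQne : Q.Nonempty := by
    obtain ⟨v, hvS, hvconn⟩ := exists_noncut hS hcard
    refine ⟨S.erase v, ?_⟩
    rw [hQdef, mem_filter, mem_powerset]
    have hsd : S \ S.erase v = {v} := by
      ext z
      simp only [mem_sdiff, mem_erase, mem_singleton]
      constructor
      · rintro ⟨hzS, hz⟩
        by_contra hne
        exact hz ⟨hne, hzS⟩
      · rintro rfl
        exact ⟨hvS, fun h => h.1 rfl⟩
    refine ⟨erase_subset _ _, ?_, hvconn, ?_, ?_, ?_⟩
    · rw [← card_pos, card_erase_of_mem hvS]; omega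
    · rw [hsd]; exact connIn_singleton v
    · rw [hsd]; exact singleton_nonempty v
    · have hsum : graphVol G (S.erase v) + G.degree v = graphVol G S := by
        simpa [graphVol] using Finset.sum_erase_add S _ hvS
      have hd : (G.degree v : ℝ) ≤ D := by exact_mod_cast hdegD v
      have hc : (graphVol G (S.erase v) : ℝ) + G.degree v = graphVol G S := by
        exact_mod_cast hsum
      linarith
  obtain ⟨A, hAQ, hAmin⟩ := Q.exists_min_image (fun A => graphVol G A) hQne
  rw [hQdef, mem_filter, mem_powerset] at hAQ
  obtain ⟨hAS, hAne, hAconn, hSAconn, hSAne, hℓA⟩ := hAQ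
  refine ⟨A, hAS, hAne, hAconn, hSAconn, hSAne, hℓA, ?_⟩
  obtain ⟨v, hvA, b₀, hb₀S, hb₀A, hvb₀⟩ := exists_crossing hS hAS hAne hSAne
  set T := A.erase v with hTdef
  have hvT : v ∉ T := notMem_erase v A
  have hTA : T ⊆ A := erase_subset v A
  have hwT : graphVol G T + G.degree v = graphVol G A := by
    simpa [graphVol] using Finset.sum_erase_add A _ hvA
  have hD1R : (1:ℝ) ≤ (D:ℝ) - 1 := by
    have : (2:ℝ) ≤ D := by exact_mod_cast hD2
    linarith
  rcases T.eq_empty_or_nonempty with hTe | hTne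
  · have hgA : graphVol G A = G.degree v := by
      rw [← hwT, hTe]; simp [graphVol]
    rw [hgA]
    have hd : (G.degree v : ℝ) ≤ D := by exact_mod_cast hdegD v
    nlinarith
  set C : V → Finset V := fun x => T.filter (fun y => ReachIn G T x y) with hCdef
  have hmemC : ∀ x ∈ T, x ∈ C x := fun x hx => mem_filter.mpr ⟨hx, reachIn_refl hx⟩
  have hCsub : ∀ x, C x ⊆ T := fun x => filter_subset _ _
  have hCmem_eq : ∀ {x y}, y ∈ C x → C x = C y := by
    intro x y hy
    have hxy : ReachIn G T x y := (mem_filter.mp hy).2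
    ext z
    simp only [hCdef, mem_filter, and_congr_right_iff]
    exact fun _ => ⟨fun h => hxy.symm.trans h, fun h => hxy.trans h⟩
  have hCreach : ∀ {x y}, y ∈ C x → ReachIn G (C x) x y := by
    intro x y hy
    obtain ⟨p, hp⟩ := (mem_filter.mp hy).2
    exact ⟨p, fun z hz => mem_filter.mpr ⟨hp z hz, ReachIn.mem_support p hp hz⟩⟩
  have hCconn : ∀ x ∈ T, ConnIn G (C x) :=
    fun x hx => connIn_of_hub (hmemC x hx) (fun y hy => (hCreach hy).symm)
  have hAiT : ∀ z ∈ A, z = v ∨ z ∈ T := by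
    intro z hz
    by_cases h : z = v
    · exact Or.inl h
    · exact Or.inr (mem_erase.mpr ⟨h, hz⟩)
  have hadjC : ∀ x ∈ T, ∃ u ∈ C x, G.Adj u v := by
    intro x hx
    obtain ⟨p, hp⟩ := hAconn (hTA hx) hvA
    obtain ⟨u, huT, huv, hur⟩ := exists_adj_of_walk p hvT (fun z hz => hAiT z (hp z hz)) hx
    exact ⟨u, mem_filter.mpr ⟨huT, hur⟩, huv⟩
  have hsmall : ∀ x ∈ T, (graphVol G (C x) : ℝ) < ℓ := by
    intro x hx
    by_contra hbig
    push_neg at hbig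
    have hBsubT : C x ⊆ T := hCsub x
    have hBsubA : C x ⊆ A := hBsubT.trans hTA
    have hBS : C x ⊆ S := hBsubA.trans hAS
    have hvB : v ∉ C x := fun h => hvT (hBsubT h)
    have hvAB : v ∈ A \ C x := mem_sdiff.mpr ⟨hvA, hvB⟩
    have hABconn : ConnIn G (A \ C x) := by
      refine connIn_of_hub hvAB (fun y hy => ?_)
      rcases mem_sdiff.mp hy with ⟨hyA, hyB⟩
      by_cases hyv : y = v
      · subst hyv; exact reachIn_refl hvAB
      have hyT : y ∈ T := mem_erase.mpr ⟨hyv, hyA⟩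
      obtain ⟨u, huC, huv⟩ := hadjC y hyT
      have hCyAB : C y ⊆ A \ C x := by
        intro z hz
        refine mem_sdiff.mpr ⟨hTA (hCsub y hz), fun hzB => ?_⟩
        have h1 := hCmem_eq hz
        have h2 := hCmem_eq hzB
        exact hyB (by rw [h2, ← h1]; exact hmemC y hyT)
      exact ((hCreach huC).mono hCyAB).trans (reachIn_adj huv (hCyAB huC) hvAB)
    have hSBeq : S \ C x = (A \ C x) ∪ (S \ A) := by
      ext z
      simp only [mem_sdiff, mem_union]
      constructor
      · rintro ⟨hzS, hzB⟩
        by_cases hzA : z ∈ A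
        · exact Or.inl ⟨hzA, hzB⟩
        · exact Or.inr ⟨hzS, hzA⟩
      · rintro (⟨hzA, hzB⟩ | ⟨hzS, hzA⟩)
        · exact ⟨hAS hzA, hzB⟩
        · exact ⟨hzS, fun h => hzA (hBsubA h)⟩
    have hSBconn : ConnIn G (S \ C x) := by
      rw [hSBeq]
      exact connIn_union hABconn hSAconn hvAB (mem_sdiff.mpr ⟨hb₀S, hb₀A⟩) hvb₀
    have hBQ : C x ∈ Q := by
      rw [hQdef, mem_filter, mem_powerset]
      exact ⟨hBS, ⟨x, hmemC x hx⟩, hCconn x hx, hSBconn,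
        ⟨b₀, mem_sdiff.mpr ⟨hb₀S, fun h => hb₀A (hBsubA h)⟩⟩, hbig⟩
    have hminB := hAmin (C x) hBQ
    have h1 : graphVol G (C x) ≤ graphVol G T := graphVol_mono hBsubT
    have h2 := hdeg1 v
    omega
  set comps := T.image C with hcompsdef
  have hcompsT : ∀ B ∈ comps, B ⊆ T := by
    intro B hB
    obtain ⟨x, hx, rfl⟩ := mem_image.mp hB
    exact hCsub x
  have hdisj : (comps : Set (Finset V)).PairwiseDisjoint id := by
    intro B1 h1 B2 h2 hne12
    simp only [mem_coe, hcompsdef, mem_image] at h1 h2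
    obtain ⟨x1, hx1, rfl⟩ := h1
    obtain ⟨x2, hx2, rfl⟩ := h2
    simp only [Function.onFun, id]
    refine Finset.disjoint_left.mpr (fun z hz1 hz2 => hne12 ?_)
    rw [hCmem_eq hz1, ← hCmem_eq hz2]
  have hcover : comps.biUnion id = T := by
    ext z
    simp only [mem_biUnion, hcompsdef, mem_image, id]
    constructor
    · rintro ⟨B, ⟨x, hx, rfl⟩, hzB⟩
      exact hCsub x hzB
    · intro hz
      exact ⟨C z, ⟨z, hz, rfl⟩, hmemC z hz⟩
  have hsumT : ∑ B ∈ comps, graphVol G B = graphVol G T := by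
    conv_rhs => rw [← hcover]
    simp only [graphVol]
    rw [Finset.sum_biUnion hdisj]
    simp only [id]
  have hb₀adj : b₀ ∈ G.neighborFinset v := by
    rw [SimpleGraph.mem_neighborFinset]; exact hvb₀
  have hcardcomps : comps.card ≤ D - 1 := by
    have hinj : ∀ B ∈ comps, ∃ u, u ∈ B ∧ G.Adj u v := by
      intro B hB
      obtain ⟨x, hx, rfl⟩ := mem_image.mp hB
      obtain ⟨u, hu, huv⟩ := hadjC x hx
      exact ⟨u, hu, huv⟩
    set ψ : Finset V → V := fun B => if h : ∃ u, u ∈ B ∧ G.Adj u v then h.choose else v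
      with hψdef
    have hψspec : ∀ B ∈ comps, ψ B ∈ B ∧ G.Adj (ψ B) v := by
      intro B hB
      have h := hinj B hB
      simp only [hψdef, dif_pos h]
      exact h.choose_spec
    have hcard1 : comps.card ≤ ((G.neighborFinset v).erase b₀).card := by
      apply Finset.card_le_card_of_injOn ψ
      · intro B hB
        obtain ⟨h1, h2⟩ := hψspec B hB
        refine mem_erase.mpr ⟨fun heq => hb₀A (heq ▸ hTA (hcompsT B hB h1)), ?_⟩
        rw [SimpleGraph.mem_neighborFinset]
        exact h2.symm
      · intro B1 h1 B2 h2 heq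
        by_contra hne
        have hd := hdisj h1 h2 hne
        simp only [Function.onFun, id] at hd
        have m1 := (hψspec B1 (mem_coe.mp h1)).1
        have m2 := (hψspec B2 (mem_coe.mp h2)).1
        rw [heq] at m1
        exact Finset.disjoint_right.mp hd m2 m1
    have hce : ((G.neighborFinset v).erase b₀).card = G.degree v - 1 := by
      rw [card_erase_of_mem hb₀adj, ← SimpleGraph.card_neighborFinset_eq_degree]
    have := hdegD v
    have := hdeg1 v
    omega
  have hsmall' : ∀ B ∈ comps, (graphVol G B : ℝ) ≤ ℓ := by
    intro B hB
    obtain ⟨x, hx, rfl⟩ := mem_image.mp hB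
    exact (hsmall x hx).le
  have hTbound : (graphVol G T : ℝ) ≤ ((D : ℝ) - 1) * ℓ := by
    have h1 : (graphVol G T : ℝ) = ∑ B ∈ comps, (graphVol G B : ℝ) := by
      rw [← hsumT]
      push_cast
      rfl
    rw [h1]
    calc ∑ B ∈ comps, (graphVol G B : ℝ) ≤ ∑ _B ∈ comps, ℓ := sum_le_sum hsmall'
      _ = comps.card * ℓ := by rw [sum_const, nsmul_eq_mul]
      _ ≤ ((D:ℝ) - 1) * ℓ := by
          apply mul_le_mul_of_nonneg_right _ hℓ0
          have hc : (comps.card : ℝ) ≤ ((D - 1 : ℕ) : ℝ) := by exact_mod_cast hcardcomps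
          rw [Nat.cast_sub (by omega)] at hc
          exact_mod_cast hc
  have hd : (G.degree v : ℝ) ≤ D := by exact_mod_cast hdegD v
  have hcast : (graphVol G T : ℝ) + G.degree v = graphVol G A := by exact_mod_cast hwT
  linarith


lemma partition_lemma {D : ℕ} {ℓ : ℝ} (hD2 : 2 ≤ D) (hdegD : ∀ v, G.degree v ≤ D)
    (hdeg1 : ∀ v : V, 1 ≤ G.degree v) (hℓ : 1 ≤ ℓ) :
    ∀ (S : Finset V), ConnIn G S → S.Nonempty →
    ∃ P : Finset (Finset V), P.biUnion id = S ∧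
      (∀ B ∈ P, B.Nonempty ∧ ConnIn G B ∧ (graphVol G B : ℝ) ≤ D + ((D:ℝ) - 1) * ℓ) ∧
      ((P : Set (Finset V)).PairwiseDisjoint id) ∧
      (∀ B ∈ P, ∀ B' ∈ P, (graphVol G B : ℝ) < ℓ → (graphVol G B' : ℝ) < ℓ → B = B') := by
  classical
  have hℓ0 : (0:ℝ) ≤ ℓ := le_trans zero_le_one hℓ
  have key : ∀ (n : ℕ) (S : Finset V), S.card ≤ n → ConnIn G S → S.Nonempty →
      ∃ P : Finset (Finset V), P.biUnion id = S ∧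
      (∀ B ∈ P, B.Nonempty ∧ ConnIn G B ∧ (graphVol G B : ℝ) ≤ D + ((D:ℝ) - 1) * ℓ) ∧
      ((P : Set (Finset V)).PairwiseDisjoint id) ∧
      (∀ B ∈ P, ∀ B' ∈ P, (graphVol G B : ℝ) < ℓ → (graphVol G B' : ℝ) < ℓ → B = B') := by
    intro n
    induction n with
    | zero =>
      intro S hcard _ hne
      exact absurd (card_pos.mpr hne) (by omega)
    | succ n ih =>
      intro S hcard hconn hne
      by_cases hbig : ℓ + D ≤ (graphVol G S : ℝ)
      · obtain ⟨A, hAS, hAne, hAconn, hSAconn, hSAne, hℓA, hAub⟩ :=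
          split_lemma hD2 hdegD hdeg1 hℓ hconn hbig
        have hcard' : (S \ A).card ≤ n := by
          have h1 : (S \ A).card < S.card := by
            apply card_lt_card
            rw [Finset.ssubset_iff_of_subset sdiff_subset]
            obtain ⟨a, ha⟩ := hAne
            exact ⟨a, hAS ha, by simp [ha]⟩
          omega
        obtain ⟨P', hP'u, hP'b, hP'd, hP's⟩ := ih (S \ A) hcard' hSAconn hSAne
        have hAnotin : ∀ B ∈ P', Disjoint A B := by
          intro B hB
          have hBsub : B ⊆ S \ A := hP'u ▸ subset_biUnion_of_mem id hB
          exact Finset.disjoint_left.mpr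
            (fun x hxA hxB => (mem_sdiff.mp (hBsub hxB)).2 hxA)
        refine ⟨insert A P', ?_, ?_, ?_, ?_⟩
        · rw [biUnion_insert, hP'u]
          simp only [id]
          exact union_sdiff_of_subset hAS
        · intro B hB
          rcases mem_insert.mp hB with rfl | hB'
          · exact ⟨hAne, hAconn, hAub⟩
          · exact hP'b B hB'
        · rw [coe_insert]
          apply Set.PairwiseDisjoint.insert hP'd
          intro B hB _
          simp only [Function.onFun, id]
          exact hAnotin B (mem_coe.mp hB)
        · intro B hB B' hB' hsB hsB'
          rcases mem_insert.mp hB with rfl | h1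
          · exact absurd hℓA (by linarith)
          rcases mem_insert.mp hB' with rfl | h2
          · exact absurd hℓA (by linarith)
          exact hP's B h1 B' h2 hsB hsB'
      · push_neg at hbig
        refine ⟨{S}, by simp, ?_, by simp, by simp⟩
        intro B hB
        rw [mem_singleton] at hB
        subst hB
        refine ⟨hne, hconn, ?_⟩
        have : ℓ * 1 ≤ ℓ * ((D:ℝ) - 1) := by
          apply mul_le_mul_of_nonneg_left _ hℓ0
          have : (2:ℝ) ≤ D := by exact_mod_cast hD2
          linarith
        nlinarith
  intro S
  exact key S.card S le_rfl

lemma interiorPairs_bound {S : Finset V} (hconn : ConnIn G S) (hne : S.Nonempty) :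
    2 * S.card ≤ interiorPairs G S + 2 := by
  classical
  have key : ∀ (n : ℕ) (S : Finset V), S.card ≤ n → ConnIn G S → S.Nonempty →
      2 * S.card ≤ interiorPairs G S + 2 := by
    intro n
    induction n with
    | zero => intro S hc _ hne; exact absurd (card_pos.mpr hne) (by omega)
    | succ n ih =>
      intro S hc hconn hne
      rcases lt_or_ge 1 S.card with hcard | hcard
      · obtain ⟨v, hvS, hvconn⟩ := exists_noncut hconn hcard
        have herase : (S.erase v).card + 1 = S.card := card_erase_add_one hvS
        have hne' : (S.erase v).Nonempty := by
          rw [← card_pos]; omega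
        obtain ⟨a, ha, b, hbS, hbn, hab⟩ :=
          exists_crossing hconn (singleton_subset_iff.mpr hvS) (singleton_nonempty v)
            (by
              obtain ⟨w, hw⟩ := hne'
              exact ⟨w, mem_sdiff.mpr ⟨(erase_subset v S) hw,
                by simp [mem_singleton, (mem_erase.mp hw).1]⟩⟩)
        rw [mem_singleton] at ha
        subst ha
        rw [mem_singleton] at hbn
        have hbe : b ∈ S.erase a := mem_erase.mpr ⟨hbn, hbS⟩
        have hIH := ih (S.erase a) (by omega) hvconn hne'
        -- interiorPairs (erase) + 2 ≤ interiorPairs S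
        have hsubpairs : interiorPairs G (S.erase a) + 2 ≤ interiorPairs G S := by
          have hsub : insert (a, b) (insert (b, a)
              (((S.erase a) ×ˢ (S.erase a)).filter fun p => G.Adj p.1 p.2)) ⊆
              ((S ×ˢ S).filter fun p => G.Adj p.1 p.2) := by
            intro p hp
            simp only [mem_insert] at hp
            rcases hp with rfl | rfl | hp
            · exact mem_filter.mpr ⟨mem_product.mpr ⟨hvS, hbS⟩, hab⟩
            · exact mem_filter.mpr ⟨mem_product.mpr ⟨hbS, hvS⟩, hab.symm⟩
            · obtain ⟨hmem, hadj⟩ := mem_filter.mp hp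
              obtain ⟨h1, h2⟩ := mem_product.mp hmem
              exact mem_filter.mpr
                ⟨mem_product.mpr ⟨(erase_subset a S) h1, (erase_subset a S) h2⟩, hadj⟩
          have hab' : a ≠ b := hab.ne
          have hna : (a, b) ∉ insert (b, a)
              (((S.erase a) ×ˢ (S.erase a)).filter fun p => G.Adj p.1 p.2) := by
            simp only [mem_insert, Prod.mk.injEq, mem_filter, mem_product, mem_erase]
            push_neg
            refine ⟨fun h _ => absurd h hab', fun h => absurd h.1.1 (by simp)⟩
          have hnb : (b, a) ∉ ((S.erase a) ×ˢ (S.erase a)).filter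
              (fun p => G.Adj p.1 p.2) := by
            simp only [mem_filter, mem_product, mem_erase]
            push_neg
            intro h
            exact absurd h.2.1 (by simp)
          have hcards := Finset.card_le_card hsub
          rw [card_insert_of_notMem hna, card_insert_of_notMem hnb] at hcards
          unfold interiorPairs; omega
        calc 2 * S.card = 2 * (S.erase a).card + 2 := by omega
          _ ≤ interiorPairs G (S.erase a) + 2 + 2 := by omega
          _ ≤ interiorPairs G S + 2 := by omega
      · have h1 : S.card = 1 := le_antisymm hcard (card_pos.mpr hne)
        omega
  exact key S.card S le_rfl hconn hne

lemma handshake_aux : graphVol G univ = interiorPairs G univ := by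
  have h1 : ∑ v : V, G.degree v = 2 * G.edgeFinset.card :=
    SimpleGraph.sum_degrees_eq_twice_card_edges G
  have h2 : 2 * G.edgeFinset.card = (univ.filter fun (x : V × V) => G.Adj x.1 x.2).card :=
    SimpleGraph.two_mul_card_edgeFinset G
  rw [graphVol, interiorPairs, Finset.univ_product_univ]
  rw [h1, h2]

end Aux

/-- Modularity of the partition of `V` given by the fibers of `c`.
Since `interiorPairs G A = 2 e(A)` and `graphVol G univ = 2|E|`, the first term is
`e(A_i)/|E|` and the second is `(vol(A_i)/vol(V))^2`. -/
def modularity {V : Type*} [Fintype V] [DecidableEq V] (G : SimpleGraph V) [DecidableRel G.Adj]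
    {ι : Type*} [Fintype ι] [DecidableEq ι] (c : V → ι) : ℚ :=
  ∑ i : ι, ((interiorPairs G (univ.filter fun v => c v = i) : ℚ) / (graphVol G univ)
    - ((graphVol G (univ.filter fun v => c v = i) : ℚ) / (graphVol G univ)) ^ 2)



section Main
variable {V : Type*} [Fintype V] [DecidableEq V] [Nonempty V] (G : SimpleGraph V)
  [DecidableRel G.Adj]

lemma modularity_eq_sum_parts (P : Finset (Finset V)) (hu : P.biUnion id = univ)
    (hd : (P : Set (Finset V)).PairwiseDisjoint id) (hne : ∀ B ∈ P, B.Nonempty) :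
    ∃ c : V → V, modularity G c =
      ∑ B ∈ P, ((interiorPairs G B : ℚ) / (graphVol G univ)
        - ((graphVol G B : ℚ) / (graphVol G univ)) ^ 2) := by
  classical
  have hexV : ∀ v : V, ∃ B ∈ P, v ∈ B := by
    intro v
    have hv : v ∈ P.biUnion id := hu ▸ mem_univ v
    simpa using mem_biUnion.mp hv
  set part : V → Finset V := fun v => (hexV v).choose with hpartdef
  have hpart : ∀ v, part v ∈ P ∧ v ∈ part v := fun v =>
    ⟨(hexV v).choose_spec.1, (hexV v).choose_spec.2⟩
  have hpart_eq : ∀ v B, B ∈ P → v ∈ B → part v = B := by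
    intro v B hB hvB
    by_contra hne'
    have hd' := hd (mem_coe.mpr (hpart v).1) (mem_coe.mpr hB) hne'
    simp only [Function.onFun, id] at hd'
    exact Finset.disjoint_left.mp hd' (hpart v).2 hvB
  set rep : Finset V → V := fun B => if h : B.Nonempty then h.choose else Classical.arbitrary V
    with hrepdef
  have hrep : ∀ B, B.Nonempty → rep B ∈ B := by
    intro B h
    simp only [hrepdef, dif_pos h]
    exact h.choose_spec
  refine ⟨fun v => rep (part v), ?_⟩
  set f : Finset V → ℚ := fun A => (interiorPairs G A : ℚ) / (graphVol G univ)
      - ((graphVol G A : ℚ) / (graphVol G univ)) ^ 2 with hfdef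
  have hf0 : f ∅ = 0 := by simp [hfdef, interiorPairs, graphVol]
  have hfiber : ∀ B ∈ P, (univ.filter fun v => rep (part v) = rep B) = B := by
    intro B hB
    ext v
    simp only [mem_filter, mem_univ, true_and]
    constructor
    · intro h
      have h1 : rep (part v) ∈ part v := hrep _ (hne _ (hpart v).1)
      rw [h] at h1
      have h2 : rep B ∈ B := hrep _ (hne _ hB)
      have h3 : part v = B := by
        by_contra hne'
        have hd' := hd (mem_coe.mpr (hpart v).1) (mem_coe.mpr hB) hne'
        simp only [Function.onFun, id] at hd'
        exact Finset.disjoint_left.mp hd' h1 h2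
      rw [← h3]
      exact (hpart v).2
    · intro hvB
      rw [hpart_eq v B hB hvB]
  have hR : ∀ i : V, i ∉ P.image rep → (univ.filter fun v => rep (part v) = i) = ∅ := by
    intro i hi
    rw [filter_eq_empty_iff]
    intro v _ h
    exact hi (mem_image.mpr ⟨part v, (hpart v).1, h⟩)
  have hinj : ∀ B1 ∈ P, ∀ B2 ∈ P, rep B1 = rep B2 → B1 = B2 := by
    intro B1 h1 B2 h2 heq
    by_contra hne'
    have hd' := hd (mem_coe.mpr h1) (mem_coe.mpr h2) hne'
    simp only [Function.onFun, id] at hd'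
    have m1 := hrep B1 (hne _ h1)
    have m2 := hrep B2 (hne _ h2)
    rw [heq] at m1
    exact Finset.disjoint_right.mp hd' m2 m1
  calc modularity G (fun v => rep (part v))
      = ∑ i : V, f (univ.filter fun v => rep (part v) = i) := rfl
    _ = ∑ i ∈ P.image rep, f (univ.filter fun v => rep (part v) = i) := by
        symm
        apply Finset.sum_subset (subset_univ _)
        intro i _ hi
        rw [hR i hi, hf0]
    _ = ∑ B ∈ P, f (univ.filter fun v => rep (part v) = rep B) := Finset.sum_image hinj
    _ = ∑ B ∈ P, f B := sum_congr rfl (fun B hB => by rw [hfiber B hB])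

end Main

set_option maxHeartbeats 2000000 in
/-- for a connected graph `G` on `n` vertices with maximum degree `Δ` and
volume `vol(V) = 2|E|`, there exists a partition `C` (given as the fibers of a coloring)
with `q(C) ≥ 2n/vol(V) − 3√(Δ/vol(V)) − Δ/vol(V)`; in particular `q*(G)` is at least this
bound. -/
theorem spanning_tree_modularity_bound {V : Type*} [Fintype V] [DecidableEq V] [Nonempty V]
    (G : SimpleGraph V) [DecidableRel G.Adj]
    (hconn : G.Connected) (hE : 0 < G.edgeFinset.card) :
    ∃ c : V → V,
      2 * (Fintype.card V : ℝ) / (graphVol G univ)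
          - 3 * Real.sqrt ((G.maxDegree : ℝ) / (graphVol G univ))
          - (G.maxDegree : ℝ) / (graphVol G univ)
        ≤ ((modularity G c : ℚ) : ℝ) := by
  classical
  set vol := graphVol G univ with hvoldef
  set D := G.maxDegree with hDdef
  set n := Fintype.card V with hndef
  obtain ⟨e, he⟩ := card_pos.mp hE
  rw [SimpleGraph.mem_edgeFinset] at he
  obtain ⟨u₀, v₀, huv⟩ : ∃ u v, G.Adj u v := by
    revert he
    refine e.ind (fun x y h => ?_)
    exact ⟨x, y, (SimpleGraph.mem_edgeSet G).mp h⟩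
  have hn2 : 2 ≤ n := Fintype.one_lt_card_iff_nontrivial.mpr ⟨⟨u₀, v₀, huv.ne⟩⟩
  have hdeg1 : ∀ v : V, 1 ≤ G.degree v := by
    intro v
    have hadj : ∃ w, G.Adj v w := by
      obtain ⟨u, hu⟩ : ∃ u : V, u ≠ v := by
        rcases eq_or_ne u₀ v with rfl | h
        · exact ⟨v₀, huv.symm.ne⟩
        · exact ⟨u₀, h⟩
      obtain ⟨p⟩ := hconn.preconnected v u
      have hnil : ¬p.Nil := SimpleGraph.Walk.not_nil_of_ne hu.symm
      exact ⟨p.getVert 1, SimpleGraph.Walk.adj_snd hnil⟩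
    exact (G.degree_pos_iff_exists_adj v).mpr hadj
  have hdegD : ∀ v, G.degree v ≤ D := fun v => SimpleGraph.degree_le_maxDegree G v
  have hD1 : 1 ≤ D := le_trans (hdeg1 u₀) (hdegD u₀)
  have hConnUniv : ConnIn G (univ : Finset V) := by
    intro x _ y _
    obtain ⟨p⟩ := hconn.preconnected x y
    exact ⟨p, fun z _ => mem_univ z⟩
  have hvoln : n ≤ vol := by
    rw [hvoldef, graphVol, hndef]
    calc Fintype.card V = ∑ _v : V, 1 := by simp
      _ ≤ ∑ v : V, G.degree v := sum_le_sum (fun v _ => hdeg1 v)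
  have hvolpos : 0 < vol := by omega
  have hvol2n : 2 * n ≤ vol + 2 := by
    have h := interiorPairs_bound hConnUniv univ_nonempty
    rw [← handshake_aux] at h
    simpa [hndef, hvoldef] using h
  have hvolR : (0:ℝ) < (vol:ℝ) := by exact_mod_cast hvolpos
  have hDR : (1:ℝ) ≤ (D:ℝ) := by exact_mod_cast hD1
  have hDR0 : (0:ℝ) < (D:ℝ) := by linarith
  by_cases hmain : 4 * D ≤ vol
  · -- main case
    have hD2 : 2 ≤ D := by
      by_contra h
      push_neg at h
      have hD' : D = 1 := by omega
      have hvle : vol ≤ n := by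
        rw [hvoldef, graphVol, hndef]
        calc ∑ v : V, G.degree v ≤ ∑ _v : V, 1 :=
              sum_le_sum (fun v _ => by rw [← hD', hDdef]; exact hdegD v)
          _ = Fintype.card V := by simp
      omega
    have hD2R : (2:ℝ) ≤ (D:ℝ) := by exact_mod_cast hD2
    set ℓ : ℝ := Real.sqrt (vol / D) with hldef
    have h4 : (4:ℝ) ≤ (vol:ℝ)/D := by
      rw [le_div_iff₀ hDR0]
      have h44 : ((4 * D : ℕ) : ℝ) ≤ ((vol : ℕ) : ℝ) := by exact_mod_cast hmain
      push_cast at h44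
      linarith
    have hl2 : 2 ≤ ℓ := by
      rw [hldef]
      calc (2:ℝ) = Real.sqrt 4 := by
            rw [show (4:ℝ) = 2^2 by norm_num, Real.sqrt_sq (by norm_num : (0:ℝ) ≤ 2)]
        _ ≤ Real.sqrt ((vol:ℝ)/D) := Real.sqrt_le_sqrt h4
    have hl1 : 1 ≤ ℓ := by linarith
    have hl0 : 0 < ℓ := by linarith
    obtain ⟨P, hPu, hPb, hPd, hPs⟩ :=
      partition_lemma hD2 hdegD hdeg1 hl1 univ hConnUniv univ_nonempty
    obtain ⟨c, hc⟩ := modularity_eq_sum_parts G P hPu hPd (fun B hB => (hPb B hB).1)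
    refine ⟨c, ?_⟩
    have hcast : ((modularity G c : ℚ) : ℝ) =
        ∑ B ∈ P, ((interiorPairs G B : ℝ) / vol - ((graphVol G B : ℝ) / vol) ^ 2) := by
      rw [hc]
      push_cast
      rfl
    rw [hcast]
    -- counting facts
    set k := P.card with hkdef
    have hPdisj : ∀ x ∈ P, ∀ y ∈ P, x ≠ y → Disjoint (id x) (id y) := by
      intro x hx y hy hxy
      have := hPd (mem_coe.mpr hx) (mem_coe.mpr hy) hxy
      simpa [Function.onFun] using this
    have hsumcard : ∑ B ∈ P, B.card = n := by
      have := Finset.card_biUnion hPdisj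
      rw [hPu] at this
      simp only [id] at this
      rw [hndef, ← card_univ, this]
    have hsumvol : ∑ B ∈ P, graphVol G B = vol := by
      have : graphVol G (P.biUnion id) = ∑ B ∈ P, graphVol G B := by
        simp only [graphVol]
        rw [Finset.sum_biUnion hPd]
        simp only [id]
      rw [hPu] at this
      rw [hvoldef, this]
    have hedge : ∀ B ∈ P, 2 * B.card ≤ interiorPairs G B + 2 :=
      fun B hB => interiorPairs_bound (hPb B hB).2.1 (hPb B hB).1
    -- at most one small part gives k ≤ vol/ℓ + 1
    have hkl : ((k:ℝ) - 1) * ℓ ≤ (vol:ℝ) := by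
      set L := P.filter (fun B => ℓ ≤ (graphVol G B : ℝ)) with hLdef
      have hLsub : L ⊆ P := filter_subset _ _
      have hsmallcard : (P \ L).card ≤ 1 := by
        apply card_le_one.mpr
        intro a ha b hb
        rw [mem_sdiff, hLdef, mem_filter] at ha hb
        have ha' : (graphVol G a : ℝ) < ℓ := by
          by_contra h
          exact ha.2 ⟨ha.1, not_lt.mp h⟩
        have hb' : (graphVol G b : ℝ) < ℓ := by
          by_contra h
          exact hb.2 ⟨hb.1, not_lt.mp h⟩
        exact hPs a ha.1 b hb.1 ha' hb'
      have hkL : k ≤ L.card + 1 := by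
        have := Finset.card_sdiff_add_card_eq_card hLsub
        omega
      have hLvol : (L.card : ℝ) * ℓ ≤ (vol:ℝ) := by
        calc (L.card : ℝ) * ℓ = ∑ _B ∈ L, ℓ := by rw [sum_const, nsmul_eq_mul]
          _ ≤ ∑ B ∈ L, (graphVol G B : ℝ) :=
              sum_le_sum (fun B hB => (mem_filter.mp hB).2)
          _ ≤ ∑ B ∈ P, (graphVol G B : ℝ) :=
              sum_le_sum_of_subset_of_nonneg hLsub (fun B _ _ => by positivity)
          _ = (vol:ℝ) := by rw [← Nat.cast_sum, hsumvol]
      have : ((k:ℝ) - 1) ≤ (L.card : ℝ) := by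
        have : (k:ℝ) ≤ (L.card : ℝ) + 1 := by exact_mod_cast hkL
        linarith
      calc ((k:ℝ) - 1) * ℓ ≤ (L.card : ℝ) * ℓ := mul_le_mul_of_nonneg_right this hl0.le
        _ ≤ (vol:ℝ) := hLvol
    -- sqrt identities
    set s : ℝ := Real.sqrt ((D:ℝ) / vol) with hsdef
    have hs0 : 0 < s := Real.sqrt_pos.mpr (by positivity)
    have hDl : (D:ℝ) * ℓ^2 = vol := by
      rw [hldef, Real.sq_sqrt (by positivity : (0:ℝ) ≤ (vol:ℝ)/D)]
      field_simp
    have hsl : s * ℓ = 1 := by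
      rw [hsdef, hldef, ← Real.sqrt_mul (by positivity)]
      rw [show (D:ℝ)/vol * ((vol:ℝ)/D) = 1 by field_simp]
      exact Real.sqrt_one
    have hsvol : s * vol = (D:ℝ) * ℓ := by
      calc s * vol = (D:ℝ) * ℓ * (s * ℓ) := by rw [← hDl]; ring
        _ = (D:ℝ) * ℓ := by rw [hsl]; ring
    -- main inequality pieces
    set M : ℝ := (D:ℝ) + ((D:ℝ) - 1) * ℓ with hMdef
    have hM0 : 0 ≤ M := by nlinarith
    have hMb : ∀ B ∈ P, (graphVol G B : ℝ) ≤ M := fun B hB => (hPb B hB).2.2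
    have S1 : 2*(n:ℝ) - 2*k ≤ ∑ B ∈ P, (interiorPairs G B : ℝ) := by
      calc 2*(n:ℝ) - 2*k = ∑ B ∈ P, (2*(B.card:ℝ) - 2) := by
            rw [sum_sub_distrib, ← mul_sum, sum_const, ← Nat.cast_sum, hsumcard]
            push_cast [hkdef]
            ring
        _ ≤ ∑ B ∈ P, (interiorPairs G B : ℝ) := by
            apply sum_le_sum
            intro B hB
            have h := hedge B hB
            have h' : (2 * B.card : ℝ) ≤ (interiorPairs G B : ℝ) + 2 := by exact_mod_cast h
            push_cast at h' ⊢
            linarith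
    have S2 : ∑ B ∈ P, ((graphVol G B : ℝ))^2 ≤ M * vol := by
      calc ∑ B ∈ P, ((graphVol G B : ℝ))^2
          ≤ ∑ B ∈ P, M * (graphVol G B : ℝ) := by
            apply sum_le_sum
            intro B hB
            rw [sq]
            exact mul_le_mul_of_nonneg_right (hMb B hB) (by positivity)
        _ = M * ∑ B ∈ P, (graphVol G B : ℝ) := by rw [mul_sum]
        _ = M * vol := by rw [← Nat.cast_sum, hsumvol]
    -- k-bound inequality : 2k + (D-1)ℓ ≤ 3 s vol
    have hkDl : (k:ℝ)*ℓ ≤ (D:ℝ)*ℓ^2 + ℓ := by nlinarith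
    have hk' : (k:ℝ) ≤ (D:ℝ)*ℓ + 1 := by
      have h := hkDl
      have : (k:ℝ)*ℓ ≤ ((D:ℝ)*ℓ + 1)*ℓ := by nlinarith
      exact le_of_mul_le_mul_right (by linarith [this]) hl0
    have hmain2 : 2*(k:ℝ) + ((D:ℝ) - 1)*ℓ ≤ 3 * s * vol := by
      have h3 : 3 * s * vol = 3 * ((D:ℝ) * ℓ) := by rw [mul_assoc, hsvol]
      rw [h3]
      have hexp : ((D:ℝ) - 1)*ℓ = (D:ℝ)*ℓ - ℓ := by ring
      rw [hexp]
      linarith [hk', hl2]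
    -- assemble
    have hsum_eq : ∑ B ∈ P, ((interiorPairs G B : ℝ) / vol - ((graphVol G B : ℝ) / vol) ^ 2)
        = (∑ B ∈ P, (interiorPairs G B : ℝ)) / vol
          - (∑ B ∈ P, ((graphVol G B : ℝ))^2) / (vol:ℝ)^2 := by
      rw [sum_sub_distrib, sum_div, sum_div]
      congr 1
      apply sum_congr rfl
      intro B _
      rw [div_pow]
    rw [hsum_eq]
    have i1 : (2*(n:ℝ) - 2*k)/vol ≤ (∑ B ∈ P, (interiorPairs G B : ℝ)) / vol :=
      (div_le_div_iff_of_pos_right hvolR).mpr S1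
    have i2 : (∑ B ∈ P, ((graphVol G B : ℝ))^2) / (vol:ℝ)^2 ≤ M / vol := by
      rw [div_le_div_iff₀ (by positivity) hvolR]
      calc (∑ B ∈ P, ((graphVol G B : ℝ))^2) * vol ≤ (M * vol) * vol := by
            exact mul_le_mul_of_nonneg_right S2 hvolR.le
        _ = M * (vol:ℝ)^2 := by ring
    have i3 : (2*(k:ℝ) + ((D:ℝ) - 1)*ℓ)/vol ≤ 3*s := by
      rw [div_le_iff₀ hvolR]
      linarith [hmain2]
    have e1 : (2*(n:ℝ) - 2*k)/vol = 2*n/vol - 2*k/vol := by ring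
    have e2 : M/vol = (D:ℝ)/vol + ((D:ℝ)-1)*ℓ/vol := by rw [hMdef]; ring
    have e3 : (2*(k:ℝ) + ((D:ℝ) - 1)*ℓ)/vol = 2*k/vol + ((D:ℝ)-1)*ℓ/vol := by ring
    rw [e1] at i1
    rw [e3] at i3
    linarith
  · -- trivial case : vol < 4D, the trivial partition works
    push_neg at hmain
    obtain ⟨c, hc⟩ := modularity_eq_sum_parts G {univ} (by simp) (by simp)
      (by intro B hB; rw [mem_singleton] at hB; subst hB; exact univ_nonempty)
    refine ⟨c, ?_⟩
    have hmod : modularity G c = 0 := by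
      rw [hc, sum_singleton, ← handshake_aux]
      have hne : (graphVol G univ : ℚ) ≠ 0 := by
        rw [← hvoldef]
        exact_mod_cast hvolpos.ne'
      rw [← hvoldef]
      field_simp
      ring
    rw [hmod]
    push_cast
    set s : ℝ := Real.sqrt ((D:ℝ) / vol) with hsdef
    have hx : (1:ℝ)/4 < (D:ℝ)/vol := by
      rw [div_lt_div_iff₀ (by norm_num) hvolR]
      have : (vol:ℝ) < 4*D := by exact_mod_cast hmain
      linarith
    have hs0 : 0 ≤ s := Real.sqrt_nonneg _
    have hs2 : s^2 = (D:ℝ)/vol := Real.sq_sqrt (by positivity)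
    have hshalf : 1/2 ≤ s := by nlinarith
    rcases eq_or_lt_of_le hn2 with hn2' | hn3
    · -- n = 2 : vol = 2, D = 1
      have hDn : D < n := by
        rw [hDdef, hndef]
        exact SimpleGraph.maxDegree_lt_card_verts G
      have hD' : D = 1 := by omega
      have hvol2 : vol = 2 := by
        have hle : G.edgeFinset.card ≤ (Fintype.card V).choose 2 :=
          SimpleGraph.card_edgeFinset_le_card_choose_two
        have hch : (Fintype.card V).choose 2 = 1 := by
          rw [hndef] at hn2'
          rw [← hn2']
          rfl
        have hveq : vol = 2 * G.edgeFinset.card := by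
          rw [hvoldef, graphVol]
          exact SimpleGraph.sum_degrees_eq_twice_card_edges G
        omega
      rw [hD', hvol2] at hx hs2 ⊢
      rw [← hn2']
      push_cast
      nlinarith
    · -- n ≥ 3
      have hvn : 2*(n:ℝ) - 2 ≤ vol := by
        have : (2*n : ℕ) ≤ vol + 2 := hvol2n
        have : ((2*n : ℕ):ℝ) ≤ ((vol + 2 : ℕ):ℝ) := by exact_mod_cast this
        push_cast at this
        linarith
      have hn3R : (3:ℝ) ≤ n := by exact_mod_cast hn3
      have h74 : 2*(n:ℝ)/vol ≤ 7/4 := by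
        rw [div_le_iff₀ hvolR]
        nlinarith
      have hDvol : (1:ℝ)/4 ≤ (D:ℝ)/vol := hx.le
      linarith
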